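/- Let A be a bounded positive self-adjoint operator on a Hilbert space H, let h₀ ∈ H, and suppose there is a constant C ≥ 0 such that |⟨h₀, h⟩|² ≤ C‖√A h‖² for all h ∈ H. Then there exists a vector g₀ in the closure of the range of A with √A g₀ = h₀ and ‖g₀‖² ≤ C. -/

import Mathlib

open scoped InnerProductSpace

set_option synthInstance.maxHeartbeats 1000000 in
/-- Block-matrix lemma (Proposition 1): if `A ≥ 0` is a bounded positive self-adjoint operator
on a complex Hilbert space `H`, `h₀ ∈ H` and `|⟨h₀, h⟩|² ≤ C‖√A h‖²` for all `h`, then there is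
`g₀` in the closure of the range of `A` with `√A g₀ = h₀` and `‖g₀‖² ≤ C`. -/
theorem block_matrix_lemma_exists
    (H : Type*) [NormedAddCommGroup H] [InnerProductSpace ℂ H] [CompleteSpace H]
    (A : H →L[ℂ] H) (hA : A.IsPositive) (h₀ : H) (C : ℝ) (hC : 0 ≤ C)
    (hbound : ∀ h : H, ‖⟪h₀, h⟫_ℂ‖ ^ 2 ≤ C * ‖CFC.sqrt A h‖ ^ 2) :
    ∃ g₀ ∈ closure (Set.range (A : H → H)),
      CFC.sqrt A g₀ = h₀ ∧ ‖g₀‖ ^ 2 ≤ C := by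
  classical
  set S : H →L[ℂ] H := CFC.sqrt A with hS
  have hA' : 0 ≤ A := (ContinuousLinearMap.nonneg_iff_isPositive A).mpr hA
  have hSnn : 0 ≤ S := CFC.sqrt_nonneg A
  have hSsa : IsSelfAdjoint S := IsSelfAdjoint.of_nonneg hSnn
  have hSsym : ∀ x y : H, ⟪S x, y⟫_ℂ = ⟪x, S y⟫_ℂ := fun x y =>
    (ContinuousLinearMap.isSelfAdjoint_iff_isSymmetric.mp hSsa) x y
  have hSS : ∀ x : H, S (S x) = A x := by
    intro x
    have := CFC.sqrt_mul_sqrt_self A hA'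
    calc S (S x) = (S * S) x := rfl
    _ = A x := by rw [this]
  -- linear bound
  have hb1 : ∀ h : H, ‖⟪h₀, h⟫_ℂ‖ ≤ Real.sqrt C * ‖S h‖ := by
    intro h
    have h1 := hbound h
    have := Real.sqrt_le_sqrt h1
    rwa [Real.sqrt_sq (norm_nonneg _), Real.sqrt_mul hC, Real.sqrt_sq (norm_nonneg _)] at this
  set Sl : H →ₗ[ℂ] H := (S : H →ₗ[ℂ] H) with hSl
  set Al : H →ₗ[ℂ] H := (A : H →ₗ[ℂ] H) with hAl
  set Fl : H →ₗ[ℂ] ℂ := ((innerSL ℂ h₀ : H →L[ℂ] ℂ) : H →ₗ[ℂ] ℂ) with hFl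
  have hle : LinearMap.ker Sl ≤ LinearMap.ker Fl := by
    intro h hh
    have hh' : S h = 0 := hh
    have := hb1 h
    rw [hh', norm_zero, mul_zero] at this
    have : ⟪h₀, h⟫_ℂ = 0 := norm_le_zero_iff.mp this
    simpa [hFl] using this
  -- the functional on the range of S
  set R : Submodule ℂ H := LinearMap.range Sl with hR
  set φ₀ : R →ₗ[ℂ] ℂ :=
    ((LinearMap.ker Sl).liftQ Fl hle).comp Sl.quotKerEquivRange.symm.toLinearMap with hφ₀
  have hφ₀app : ∀ h : H, φ₀ ⟨Sl h, LinearMap.mem_range_self Sl h⟩ = ⟪h₀, h⟫_ℂ := by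
    intro h
    have e1 := Sl.quotKerEquivRange_symm_apply_image h (LinearMap.mem_range_self Sl h)
    rw [hφ₀, LinearMap.comp_apply, LinearEquiv.coe_toLinearMap, e1, Submodule.mkQ_apply,
      Submodule.liftQ_apply]
    rfl
  have hφ₀bound : ∀ x : R, ‖φ₀ x‖ ≤ Real.sqrt C * ‖x‖ := by
    rintro ⟨x, hx⟩
    obtain ⟨h, rfl⟩ := hx
    rw [hφ₀app h]
    simpa [hSl] using hb1 h
  set φ : R →L[ℂ] ℂ := φ₀.mkContinuous (Real.sqrt C) hφ₀bound with hφ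
  have hφnorm : ‖φ‖ ≤ Real.sqrt C :=
    φ₀.mkContinuous_norm_le (Real.sqrt_nonneg C) hφ₀bound
  obtain ⟨g, hgext, hgnorm⟩ := exists_extension_norm_eq R φ
  set g₀' : H := (InnerProductSpace.toDual ℂ H).symm g with hg₀'
  have hg₀'norm : ‖g₀'‖ ≤ Real.sqrt C := by
    rw [hg₀', LinearIsometryEquiv.norm_map, hgnorm]
    exact hφnorm
  have hg₀'inner : ∀ h : H, ⟪g₀', S h⟫_ℂ = ⟪h₀, h⟫_ℂ := by
    intro h
    rw [hg₀', InnerProductSpace.toDual_symm_apply]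
    have : g (⟨Sl h, LinearMap.mem_range_self Sl h⟩ : R) = ⟪h₀, h⟫_ℂ := by
      rw [hgext]
      rw [hφ]
      rw [LinearMap.mkContinuous_apply]
      exact hφ₀app h
    exact this
  -- the closure of the range of A
  set K : Submodule ℂ H := Al.range.topologicalClosure with hK
  haveI : CompleteSpace K := Al.range.isClosed_topologicalClosure.completeSpace_coe
  -- range of S is inside K
  have hSK : ∀ h : H, S h ∈ K := by
    intro h
    rw [hK, ← Submodule.orthogonal_orthogonal_eq_closure]
    rw [Submodule.mem_orthogonal]
    intro x hx
    rw [Submodule.mem_orthogonal] at hx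
    have hAx : ⟪A x, x⟫_ℂ = 0 := hx (A x) (LinearMap.mem_range_self Al x)
    have hSx : S x = 0 := by
      have h2 : ⟪S x, S x⟫_ℂ = 0 := by
        rw [← hSsym (S x) x, hSS x]; exact hAx
      exact inner_self_eq_zero.mp h2
    rw [← hSsym, hSx, inner_zero_left]
  set g₀ : H := (K.orthogonalProjectionOnto g₀' : H) with hg₀
  have hg₀mem : g₀ ∈ closure (Set.range (A : H → H)) := by
    have h1 : g₀ ∈ (K : Set H) := (K.orthogonalProjectionOnto g₀').2
    rw [hK, Submodule.topologicalClosure_coe, LinearMap.coe_range] at h1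
    exact h1
  have hproj : ∀ h : H, ⟪g₀, S h⟫_ℂ = ⟪g₀', S h⟫_ℂ := by
    intro h
    have hmem : g₀' - g₀ ∈ Kᗮ := by
      rw [hg₀]
      exact K.sub_starProjection_mem_orthogonal g₀'
    have h0 : ⟪g₀' - g₀, S h⟫_ℂ = 0 := by
      have := hmem (S h) (hSK h)
      rwa [inner_eq_zero_symm] at this
    rw [inner_sub_left] at h0
    exact (sub_eq_zero.mp h0).symm
  have hSg₀ : S g₀ = h₀ := by
    apply ext_inner_right ℂ
    intro v
    rw [hSsym, hproj, hg₀'inner]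
  have hg₀norm : ‖g₀‖ ^ 2 ≤ C := by
    have h1 : ‖g₀‖ ≤ ‖g₀'‖ := by
      calc ‖g₀‖ = ‖K.orthogonalProjectionOnto g₀'‖ := rfl
      _ ≤ 1 * ‖g₀'‖ := (K.orthogonalProjectionOnto).le_of_opNorm_le (Submodule.orthogonalProjectionOnto_norm_le K) g₀'
      _ = ‖g₀'‖ := one_mul _
    have h2 : ‖g₀‖ ≤ Real.sqrt C := h1.trans hg₀'norm
    calc ‖g₀‖ ^ 2 ≤ Real.sqrt C ^ 2 := by
          exact pow_le_pow_left₀ (norm_nonneg _) h2 2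
    _ = C := Real.sq_sqrt hC
  exact ⟨g₀, hg₀mem, hSg₀, hg₀norm⟩
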